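/- Let p be a prime, e ≥ 1, and A, B ∈ R = ℤ/p^eℤ. There exists a polynomial f ∈ R[x] of degree at most e − 1 such that for all X, Z ∈ R with p ∣ X, p ∣ Z and Z = X³ + A·X·Z² + B·Z³, one has Z = f(X). (Every point at infinity of the curve over ℤ/p^eℤ has the form (X : 1 : f(X)) with p ∣ X.) -/

import Mathlib

open Polynomial

/-- Iteration of the curve equation starting from 0. -/
noncomputable def infItr {R : Type*} [CommRing R] (A B : R) : ℕ → Polynomial R
  | 0 => 0
  | (k+1) => X ^ 3 + C A * X * (infItr A B k) ^ 2 + C B * (infItr A B k) ^ 3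

/-- There is a polynomial `f` of degree at most `e - 1` over `ℤ/p^eℤ` so that every
point at infinity of the Weierstrass curve has the form `(X : 1 : f(X))` with `p ∣ X`. -/
theorem exists_infinity_polynomial
    {p : ℕ} (hp : p.Prime) {e : ℕ} (he : 1 ≤ e)
    (A B : ZMod (p ^ e)) :
    ∃ f : Polynomial (ZMod (p ^ e)),
      f.natDegree ≤ e - 1 ∧
      ∀ X Z : ZMod (p ^ e),
        (p : ZMod (p ^ e)) ∣ X → (p : ZMod (p ^ e)) ∣ Z →
        Z = X ^ 3 + A * X * Z ^ 2 + B * Z ^ 3 →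
        Z = f.eval X := by
  haveI : Fact (1 < p ^ e) :=
    ⟨Nat.one_lt_pow (by omega) hp.one_lt⟩
  have hmonic : (X ^ e : Polynomial (ZMod (p ^ e))).Monic := monic_X_pow e
  refine ⟨infItr A B e %ₘ (X ^ e), ?_, ?_⟩
  · have hdeg : (infItr A B e %ₘ (X ^ e)).degree < (X ^ e : Polynomial (ZMod (p ^ e))).degree :=
      degree_modByMonic_lt _ hmonic
    rw [degree_X_pow] at hdeg
    by_cases hr : infItr A B e %ₘ (X ^ e) = 0
    · simp [hr]
    · have : (infItr A B e %ₘ (X ^ e)).natDegree < e :=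
        (natDegree_lt_iff_degree_lt hr).mpr hdeg
      omega
  · intro X0 Z hX hZ heq
    have hpe : (p : ZMod (p ^ e)) ^ e = 0 := by
      rw [← Nat.cast_pow, ZMod.natCast_self]
    have key : ∀ k, (p : ZMod (p ^ e)) ^ k ∣ Z - (infItr A B k).eval X0 ∧
        (p : ZMod (p ^ e)) ∣ (infItr A B k).eval X0 := by
      intro k; induction k with
      | zero => simp only [infItr, eval_zero, sub_zero, pow_zero]; exact ⟨one_dvd _, dvd_zero _⟩
      | succ k ih =>
        obtain ⟨h1, h2⟩ := ih
        constructor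
        · have hid : Z - (infItr A B (k + 1)).eval X0 =
              (Z - (infItr A B k).eval X0) *
                (A * X0 * (Z + (infItr A B k).eval X0) +
                  B * (Z ^ 2 + Z * (infItr A B k).eval X0 + ((infItr A B k).eval X0) ^ 2)) := by
            simp only [infItr, eval_add, eval_mul, eval_pow, eval_X, eval_C]
            linear_combination heq
          rw [hid, pow_succ]
          exact mul_dvd_mul h1 (dvd_add ((hX.mul_left A).mul_right _)
            ((dvd_add (dvd_add (dvd_pow hZ two_ne_zero) (h2.mul_left Z))
              (dvd_pow h2 two_ne_zero)).mul_left B))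
        · simp only [infItr, eval_add, eval_mul, eval_pow, eval_X, eval_C]
          exact dvd_add (dvd_add (dvd_pow hX three_ne_zero)
            ((dvd_pow h2 two_ne_zero).mul_left _)) ((dvd_pow h2 three_ne_zero).mul_left B)
    have hZeq : Z = (infItr A B e).eval X0 := by
      obtain ⟨d, hd⟩ := (key e).1
      rw [hpe, zero_mul] at hd
      exact sub_eq_zero.mp hd
    have hX0e : X0 ^ e = 0 := by
      obtain ⟨c, hc⟩ := hX
      rw [hc, mul_pow, hpe, zero_mul]
    have hsplit := modByMonic_add_div (infItr A B e) (X ^ e : Polynomial (ZMod (p ^ e)))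
    have := congrArg (Polynomial.eval X0) hsplit
    simp only [eval_add, eval_mul, eval_pow, eval_X, hX0e, zero_mul, add_zero] at this
    rw [hZeq, ← this]
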